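/- Every piecewise linear function on ℝ^n (piecewise linear with respect to some complete polyhedral fan) is the difference of two piecewise linear convex functions. -/

import Mathlib

open Pointwise

section PLHelpers

open Matrix Set Finset Filter Topology

namespace PL13

variable {n k : ℕ}

lemma cont_dot (v : Fin n → ℝ) : Continuous fun x : Fin n → ℝ => v ⬝ᵥ x := by
  unfold dotProduct
  exact continuous_finset_sum _ fun i _ => (continuous_const.mul (continuous_apply i))

lemma sum_dot {ι : Type*} (s : Finset ι) (f : ι → Fin n → ℝ) (x : Fin n → ℝ) :
    (∑ i ∈ s, f i) ⬝ᵥ x = ∑ i ∈ s, f i ⬝ᵥ x := by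
  classical
  induction s using Finset.induction with
  | empty => simp
  | insert hnot ih => simp [Finset.sum_insert, *, add_dotProduct]

lemma dot_combo (v x y : Fin n → ℝ) (a b : ℝ) :
    v ⬝ᵥ (a • x + b • y) = a * (v ⬝ᵥ x) + b * (v ⬝ᵥ y) := by
  simp [dotProduct_add, dotProduct_smul, smul_eq_mul]

def Cone (A : Finset (Fin n → ℝ)) : Set (Fin n → ℝ) := {x | ∀ a ∈ A, 0 ≤ a ⬝ᵥ x}

lemma cone_closed (A : Finset (Fin n → ℝ)) : IsClosed (Cone A) := by
  have : Cone A = ⋂ a ∈ A, {x : Fin n → ℝ | 0 ≤ a ⬝ᵥ x} := by ext x; simp [Cone]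
  rw [this]
  exact isClosed_biInter fun a _ => isClosed_le continuous_const (cont_dot a)

lemma cone_convex (A : Finset (Fin n → ℝ)) : Convex ℝ (Cone A) := by
  intro x hx y hy a b ha hb hab
  intro v hv
  have h1 := hx v hv
  have h2 := hy v hv
  rw [dot_combo]
  nlinarith

lemma h_cont (h : (Fin n → ℝ) → ℝ) (A : Fin k → Finset (Fin n → ℝ))
    (ℓ : Fin k → Fin n → ℝ)
    (hcover : ∀ x : Fin n → ℝ, ∃ i, x ∈ Cone (A i))
    (hlin : ∀ i, ∀ x ∈ Cone (A i), h x = ℓ i ⬝ᵥ x) : Continuous h := by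
  apply LocallyFinite.continuous (f := fun i => Cone (A i))
    (locallyFinite_of_finite _)
  · rw [eq_univ_iff_forall]
    intro x
    obtain ⟨i, hi⟩ := hcover x
    exact mem_iUnion.2 ⟨i, hi⟩
  · exact fun i => cone_closed (A i)
  · intro i
    exact ((cont_dot (ℓ i)).continuousOn).congr (fun x hx => hlin i x hx)

noncomputable def pfun (ℓ : Fin k → Fin n → ℝ) (x : Fin n → ℝ) : ℝ :=
  ∑ i, ∑ j, max ((ℓ i - ℓ j) ⬝ᵥ x) 0

lemma p_cont (ℓ : Fin k → Fin n → ℝ) : Continuous (pfun ℓ) :=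
  continuous_finset_sum _ fun i _ => continuous_finset_sum _ fun j _ =>
    (cont_dot _).max continuous_const

lemma side (A : Fin k → Finset (Fin n → ℝ))
    (hcover : ∀ x : Fin n → ℝ, ∃ i, x ∈ Cone (A i))
    (γ : ℝ → Fin n → ℝ) (hγ : Continuous γ) (t : ℝ) (S : Set ℝ)
    (hne : (𝓝[S] t).NeBot) :
    ∃ c, ∃ u ∈ S, γ t ∈ Cone (A c) ∧ γ u ∈ Cone (A c) := by
  have hfreq : ∃ c, ∃ᶠ u in 𝓝[S] t, γ u ∈ Cone (A c) := by
    by_contra hc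
    push_neg at hc
    have hev : ∀ c, ∀ᶠ u in 𝓝[S] t, γ u ∉ Cone (A c) := by
      intro c
      simpa [Filter.not_frequently] using hc c
    have : ∀ᶠ u in 𝓝[S] t, ∀ c, γ u ∉ Cone (A c) := eventually_all.2 hev
    obtain ⟨u, hu⟩ := this.exists
    obtain ⟨c, hcu⟩ := hcover (γ u)
    exact hu c hcu
  obtain ⟨c, hfc⟩ := hfreq
  have ht : γ t ∈ Cone (A c) := by
    have hclosed : IsClosed (γ ⁻¹' Cone (A c)) := (cone_closed (A c)).preimage hγ
    have : ∃ᶠ u in 𝓝 t, u ∈ γ ⁻¹' Cone (A c) := hfc.filter_mono nhdsWithin_le_nhds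
    exact hclosed.closure_subset (mem_closure_iff_frequently.2 this)
  have : ∃ᶠ u in 𝓝[S] t, γ u ∈ Cone (A c) ∧ u ∈ S :=
    hfc.and_eventually self_mem_nhdsWithin
  obtain ⟨u, hu1, hu2⟩ := this.exists
  exact ⟨c, u, hu2, ht, hu1⟩

lemma max_add_le (α β : ℝ) : max (α + β) 0 ≤ max α 0 + max β 0 :=
  max_le (add_le_add (le_max_left _ _) (le_max_left _ _)) (by positivity)

noncomputable def pfun' (ℓ : Fin k → Fin n → ℝ) (x : Fin n → ℝ) : ℝ :=
  ∑ q : Fin k × Fin k, max ((ℓ q.1 - ℓ q.2) ⬝ᵥ x) 0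

lemma pfun_eq (ℓ : Fin k → Fin n → ℝ) (x : Fin n → ℝ) : pfun ℓ x = pfun' ℓ x := by
  rw [pfun, pfun', Fintype.sum_prod_type]

lemma sum_split {ι : Type*} [Fintype ι] [DecidableEq ι] (g : ι → ℝ) {x y : ι}
    (hxy : x ≠ y) :
    ∑ q : ι, g q = g x + g y + ∑ q ∈ (Finset.univ.erase x).erase y, g q := by
  rw [← Finset.add_sum_erase _ g (Finset.mem_univ x),
    ← Finset.add_sum_erase _ g (Finset.mem_erase.2 ⟨Ne.symm hxy, Finset.mem_univ y⟩)]
  ring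

lemma p_mid (ℓ : Fin k → Fin n → ℝ) {a b : Fin k} {u v z : Fin n → ℝ}
    (hsum : u + v = z + z) (hz : (ℓ a - ℓ b) ⬝ᵥ z = 0) :
    2 * pfun ℓ z + |(ℓ a - ℓ b) ⬝ᵥ u| ≤ pfun ℓ u + pfun ℓ v := by
  classical
  have key : (ℓ a - ℓ b) ⬝ᵥ u + (ℓ a - ℓ b) ⬝ᵥ v
      = (ℓ a - ℓ b) ⬝ᵥ z + (ℓ a - ℓ b) ⬝ᵥ z := by
    rw [← dotProduct_add, ← dotProduct_add, hsum]
  have hva : (ℓ a - ℓ b) ⬝ᵥ v = -((ℓ a - ℓ b) ⬝ᵥ u) := by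
    rw [hz] at key; linarith
  have hterm : ∀ q : Fin k × Fin k,
      2 * max ((ℓ q.1 - ℓ q.2) ⬝ᵥ z) 0 ≤
        max ((ℓ q.1 - ℓ q.2) ⬝ᵥ u) 0 + max ((ℓ q.1 - ℓ q.2) ⬝ᵥ v) 0 := by
    intro q
    have hq : (ℓ q.1 - ℓ q.2) ⬝ᵥ u + (ℓ q.1 - ℓ q.2) ⬝ᵥ v
        = 2 * ((ℓ q.1 - ℓ q.2) ⬝ᵥ z) := by
      rw [← dotProduct_add, hsum, dotProduct_add]; ring
    have h1 := max_add_le ((ℓ q.1 - ℓ q.2) ⬝ᵥ u) ((ℓ q.1 - ℓ q.2) ⬝ᵥ v)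
    rw [hq] at h1
    have h2 : (0:ℝ) ≤ max ((ℓ q.1 - ℓ q.2) ⬝ᵥ u) 0 := le_max_right _ _
    have h3 : (0:ℝ) ≤ max ((ℓ q.1 - ℓ q.2) ⬝ᵥ v) 0 := le_max_right _ _
    rcases le_total ((ℓ q.1 - ℓ q.2) ⬝ᵥ z) 0 with h | h
    · rw [max_eq_right h]; linarith
    · rw [max_eq_left h]
      rw [max_eq_left (by linarith : (0:ℝ) ≤ 2 * ((ℓ q.1 - ℓ q.2) ⬝ᵥ z))] at h1
      linarith
  by_cases hab : a = b
  · subst hab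
    have h0 : (ℓ a - ℓ a) ⬝ᵥ u = 0 := by simp
    rw [h0, abs_zero, add_zero, pfun_eq, pfun_eq, pfun_eq, pfun', pfun', pfun',
      Finset.mul_sum, ← Finset.sum_add_distrib]
    exact Finset.sum_le_sum fun q _ => hterm q
  · set d := (ℓ a - ℓ b) ⬝ᵥ u with hd
    have flip : ∀ w : Fin n → ℝ, (ℓ b - ℓ a) ⬝ᵥ w = -((ℓ a - ℓ b) ⬝ᵥ w) := by
      intro w
      rw [sub_dotProduct, sub_dotProduct]; ring
    have hba_u : (ℓ b - ℓ a) ⬝ᵥ u = -d := by rw [flip, hd]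
    have hba_v : (ℓ b - ℓ a) ⬝ᵥ v = d := by rw [flip, hva, neg_neg]
    have hba_z : (ℓ b - ℓ a) ⬝ᵥ z = 0 := by rw [flip, hz, neg_zero]
    have hne : ((a,b) : Fin k × Fin k) ≠ (b,a) :=
      fun h' => hab (congrArg Prod.fst h')
    set f : (Fin k × Fin k) → (Fin n → ℝ) → ℝ := fun q w => max ((ℓ q.1 - ℓ q.2) ⬝ᵥ w) 0
      with hf
    have split : ∀ w : Fin n → ℝ, pfun ℓ w =
        f (a,b) w + f (b,a) w + ∑ q ∈ (Finset.univ.erase (a,b)).erase (b,a), f q w := by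
      intro w
      rw [pfun_eq, pfun']
      exact sum_split (fun q => f q w) hne
    rw [split u, split v, split z]
    have hrest : 2 * ∑ q ∈ (Finset.univ.erase (a,b)).erase (b,a), f q z ≤
        (∑ q ∈ (Finset.univ.erase (a,b)).erase (b,a), f q u)
        + ∑ q ∈ (Finset.univ.erase (a,b)).erase (b,a), f q v := by
      rw [Finset.mul_sum, ← Finset.sum_add_distrib]
      exact Finset.sum_le_sum fun q _ => hterm q
    have hfab : f (a,b) u + f (a,b) v = max d 0 + max (-d) 0 := by
      simp only [hf, hva, hd]
    have hfba : f (b,a) u + f (b,a) v = max (-d) 0 + max d 0 := by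
      simp only [hf, hba_u, hba_v]
    have habs : max d 0 + max (-d) 0 = |d| := by
      rcases le_total d 0 with h | h
      · rw [max_eq_right h, max_eq_left (by linarith), abs_of_nonpos h]; ring
      · rw [max_eq_left h, max_eq_right (by linarith), abs_of_nonneg h]; ring
    have hz1 : f (a,b) z = 0 := by simp only [hf, hz]; exact max_self 0
    have hz2 : f (b,a) z = 0 := by simp only [hf, hba_z]; exact max_self 0
    rw [hz1, hz2]
    have h3 : f (a,b) u + f (a,b) v + (f (b,a) u + f (b,a) v) = 2 * |d| := by
      rw [hfab, hfba]; linarith [habs]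
    linarith [abs_nonneg d, hrest, h3]

lemma local_mid (h : (Fin n → ℝ) → ℝ) (A : Fin k → Finset (Fin n → ℝ))
    (ℓ : Fin k → Fin n → ℝ)
    (hlin : ∀ i, ∀ x ∈ Cone (A i), h x = ℓ i ⬝ᵥ x)
    {a b : Fin k} {u v z : Fin n → ℝ}
    (hsum : u + v = z + z)
    (hau : u ∈ Cone (A a)) (haz : z ∈ Cone (A a))
    (hbz : z ∈ Cone (A b)) (hbv : v ∈ Cone (A b)) :
    2 * (h z + pfun ℓ z) ≤ (h u + pfun ℓ u) + (h v + pfun ℓ v) := by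
  have hz0 : (ℓ a - ℓ b) ⬝ᵥ z = 0 := by
    rw [sub_dotProduct, ← hlin a z haz, ← hlin b z hbz]; ring
  have hu : h u = ℓ a ⬝ᵥ u := hlin a u hau
  have hv : h v = ℓ b ⬝ᵥ v := hlin b v hbv
  have hz : h z = ℓ a ⬝ᵥ z := hlin a z haz
  set d := (ℓ a - ℓ b) ⬝ᵥ u with hd
  have hva : (ℓ a - ℓ b) ⬝ᵥ v = -d := by
    have key : (ℓ a - ℓ b) ⬝ᵥ u + (ℓ a - ℓ b) ⬝ᵥ v
        = (ℓ a - ℓ b) ⬝ᵥ z + (ℓ a - ℓ b) ⬝ᵥ z := by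
      rw [← dotProduct_add, ← dotProduct_add, hsum]
    rw [hz0] at key
    rw [← hd] at key
    linarith
  have hsum_a : ℓ a ⬝ᵥ u + ℓ a ⬝ᵥ v = 2 * (ℓ a ⬝ᵥ z) := by
    rw [← dotProduct_add, hsum, dotProduct_add]; ring
  have hhv : ℓ b ⬝ᵥ v = ℓ a ⬝ᵥ v + d := by
    have := hva
    rw [sub_dotProduct] at this
    linarith
  have hp := p_mid ℓ hsum hz0
  rw [← hd] at hp
  have habs : -d ≤ |d| := neg_le_abs d
  rw [hu, hv, hz, hhv]
  linarith

lemma affine_combo (x y : Fin n → ℝ) (c d s t : ℝ) (hcd : c + d = 1) :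
    x + (c*s + d*t) • (y - x) = c • (x + s • (y - x)) + d • (x + t • (y - x)) := by
  have hc : c = 1 - d := by linarith
  subst hc
  funext i
  simp only [Pi.add_apply, Pi.smul_apply, Pi.sub_apply, smul_eq_mul]
  ring

lemma g_convex (h : (Fin n → ℝ) → ℝ) (A : Fin k → Finset (Fin n → ℝ))
    (ℓ : Fin k → Fin n → ℝ)
    (hcover : ∀ x : Fin n → ℝ, ∃ i, x ∈ Cone (A i))
    (hlin : ∀ i, ∀ x ∈ Cone (A i), h x = ℓ i ⬝ᵥ x) :
    ConvexOn ℝ Set.univ (fun x => h x + pfun ℓ x) := by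
  have hgc : Continuous fun x => h x + pfun ℓ x :=
    (h_cont h A ℓ hcover hlin).add (p_cont ℓ)
  refine ⟨convex_univ, ?_⟩
  intro x _ y _ aa bb ha hb hab
  set g : (Fin n → ℝ) → ℝ := fun w => h w + pfun ℓ w with hg
  set γ : ℝ → Fin n → ℝ := fun t => x + t • (y - x) with hγ
  have hγcont : Continuous γ := continuous_const.add (continuous_id.smul continuous_const)
  set ψ : ℝ → ℝ := fun t => g (γ t) - ((1 - t) * g x + t * g y) with hψ
  have hψcont : Continuous ψ := by
    apply Continuous.sub (hgc.comp hγcont)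
    exact ((continuous_const.sub continuous_id).mul continuous_const).add
      (continuous_id.mul continuous_const)
  have hγ0 : γ 0 = x := by simp [hγ]
  have hγ1 : γ 1 = y := by
    funext i
    simp only [hγ, Pi.add_apply, Pi.smul_apply, Pi.sub_apply, smul_eq_mul, one_mul]
    ring
  have hψ0 : ψ 0 = 0 := by simp [hψ, hγ0]
  have hψ1 : ψ 1 = 0 := by simp [hψ, hγ1]
  suffices hs : ∀ t ∈ Icc (0:ℝ) 1, ψ t ≤ 0 by
    have hbb : bb ∈ Icc (0:ℝ) 1 := ⟨hb, by linarith⟩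
    have h1 := hs bb hbb
    have hgb : γ bb = aa • x + bb • y := by
      funext i
      simp only [hγ, Pi.add_apply, Pi.smul_apply, Pi.sub_apply, smul_eq_mul]
      have : aa = 1 - bb := by linarith
      rw [this]; ring
    rw [hψ] at h1
    simp only at h1
    rw [hgb] at h1
    simp only [smul_eq_mul]
    have haa : aa = 1 - bb := by linarith
    rw [haa] at h1 ⊢
    linarith
  by_contra hcon
  push_neg at hcon
  obtain ⟨t₁, ht₁mem, ht₁⟩ := hcon
  obtain ⟨t₀, ht₀mem, ht₀max⟩ := isCompact_Icc.exists_isMaxOn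
    (Set.nonempty_Icc.2 zero_le_one) hψcont.continuousOn
  rw [isMaxOn_iff] at ht₀max
  set m := ψ t₀ with hm
  have hmpos : 0 < m := lt_of_lt_of_le ht₁ (ht₀max t₁ ht₁mem)
  set T : Set ℝ := Icc (0:ℝ) 1 ∩ ψ ⁻¹' {m} with hT
  have hTcompact : IsCompact T :=
    isCompact_Icc.inter_right (isClosed_singleton.preimage hψcont)
  have hTne : T.Nonempty := ⟨t₀, ht₀mem, rfl⟩
  obtain ⟨ts, htsT, htub⟩ := hTcompact.exists_isGreatest hTne
  have htsIcc : ts ∈ Icc (0:ℝ) 1 := htsT.1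
  have htsψ : ψ ts = m := htsT.2
  have hts0 : 0 < ts := by
    rcases lt_or_eq_of_le htsIcc.1 with h' | h'
    · exact h'
    · exfalso; rw [← h'] at htsψ; rw [hψ0] at htsψ; linarith
  have hts1 : ts < 1 := by
    rcases lt_or_eq_of_le htsIcc.2 with h' | h'
    · exact h'
    · exfalso; rw [h'] at htsψ; rw [hψ1] at htsψ; linarith
  have hneL : (𝓝[Ioo 0 ts] ts).NeBot := by
    rw [← mem_closure_iff_nhdsWithin_neBot, closure_Ioo (ne_of_lt hts0)]
    exact ⟨hts0.le, le_refl ts⟩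
  have hneR : (𝓝[Ioo ts 1] ts).NeBot := by
    rw [← mem_closure_iff_nhdsWithin_neBot, closure_Ioo (ne_of_lt hts1)]
    exact ⟨le_refl ts, hts1.le⟩
  obtain ⟨ia, u₀, hu₀, hia_ts, hia_u₀⟩ := side A hcover γ hγcont ts (Ioo 0 ts) hneL
  obtain ⟨ib, v₀, hv₀, hib_ts, hib_v₀⟩ := side A hcover γ hγcont ts (Ioo ts 1) hneR
  set δ := min (ts - u₀) (v₀ - ts) with hδdef
  have hδ : 0 < δ := lt_min (by linarith [hu₀.2]) (by linarith [hv₀.1])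
  have hδ1 : δ ≤ ts - u₀ := min_le_left _ _
  have hδ2 : δ ≤ v₀ - ts := min_le_right _ _
  set u := ts - δ with hudef
  set v := ts + δ with hvdef
  have hu_mem : γ u ∈ Cone (A ia) := by
    have htu : (0:ℝ) < ts - u₀ := by linarith [hu₀.2]
    set c := δ / (ts - u₀) with hc
    have hc0 : 0 ≤ c := div_nonneg hδ.le htu.le
    have hc1 : c ≤ 1 := (div_le_one htu).mpr hδ1
    have hmul : c * (ts - u₀) = δ := div_mul_cancel₀ δ (ne_of_gt htu)
    have hcomb : c * u₀ + (1 - c) * ts = u := by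
      rw [hudef]; linear_combination (-1 : ℝ) * hmul
    have hmem := cone_convex (A ia) hia_u₀ hia_ts hc0
      (by linarith : (0:ℝ) ≤ 1 - c) (by ring)
    have he : γ u = c • γ u₀ + (1 - c) • γ ts := by
      show x + u • (y - x) = c • (x + u₀ • (y - x)) + (1 - c) • (x + ts • (y - x))
      rw [← hcomb]
      exact affine_combo x y c (1-c) u₀ ts (by ring)
    rw [he]; exact hmem
  have hv_mem : γ v ∈ Cone (A ib) := by
    have htv : (0:ℝ) < v₀ - ts := by linarith [hv₀.1]
    set c := δ / (v₀ - ts) with hc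
    have hc0 : 0 ≤ c := div_nonneg hδ.le htv.le
    have hc1 : c ≤ 1 := (div_le_one htv).mpr hδ2
    have hmul : c * (v₀ - ts) = δ := div_mul_cancel₀ δ (ne_of_gt htv)
    have hcomb : c * v₀ + (1 - c) * ts = v := by
      rw [hvdef]; linear_combination hmul
    have hmem := cone_convex (A ib) hib_v₀ hib_ts hc0
      (by linarith : (0:ℝ) ≤ 1 - c) (by ring)
    have he : γ v = c • γ v₀ + (1 - c) • γ ts := by
      show x + v • (y - x) = c • (x + v₀ • (y - x)) + (1 - c) • (x + ts • (y - x))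
      rw [← hcomb]
      exact affine_combo x y c (1-c) v₀ ts (by ring)
    rw [he]; exact hmem
  have hsum2 : γ u + γ v = γ ts + γ ts := by
    funext i
    simp only [hγ, Pi.add_apply, Pi.smul_apply, Pi.sub_apply, smul_eq_mul, hudef, hvdef]
    ring
  have hloc := local_mid h A ℓ hlin hsum2 hu_mem hia_ts hib_ts hv_mem
  have hloc' : 2 * g (γ ts) ≤ g (γ u) + g (γ v) := by
    simp only [hg]
    linarith [hloc]
  have e1 : ψ u + ψ v = g (γ u) + g (γ v)
      - (((1 - u) * g x + u * g y) + ((1 - v) * g x + v * g y)) := by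
    simp only [hψ]; ring
  have e2 : ((1 - u) * g x + u * g y) + ((1 - v) * g x + v * g y)
      = 2 * ((1 - ts) * g x + ts * g y) := by
    rw [hudef, hvdef]; ring
  have e3 : 2 * ψ ts = 2 * g (γ ts) - 2 * ((1 - ts) * g x + ts * g y) := by
    simp only [hψ]; ring
  have hψu : ψ u ≤ m :=
    ht₀max u ⟨by rw [hudef]; linarith [hu₀.1, hδ1], by rw [hudef]; linarith [htsIcc.2, hδ]⟩
  have hvIcc : v ∈ Icc (0:ℝ) 1 :=
    ⟨by rw [hvdef]; linarith [htsIcc.1, hδ.le], by rw [hvdef]; linarith [hv₀.2, hδ2]⟩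
  have hψv : ψ v < m := by
    rcases lt_or_eq_of_le (ht₀max v hvIcc) with h' | h'
    · exact h'
    · exfalso
      have hvT : v ∈ T :=
        ⟨hvIcc, by simp only [Set.mem_preimage, Set.mem_singleton_iff]; exact h'⟩
      have := htub hvT
      rw [hvdef] at this
      linarith
  linarith [e1, e2, e3, hloc', hψu, hψv, htsψ]


noncomputable def sig (ℓ : Fin k → Fin n → ℝ) (s : Fin k → Fin k → Bool) : Fin n → ℝ :=
  ∑ i, ∑ j, if s i j then ℓ i - ℓ j else 0

lemma sig_dot (ℓ : Fin k → Fin n → ℝ) (s : Fin k → Fin k → Bool) (x : Fin n → ℝ) :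
    sig ℓ s ⬝ᵥ x = ∑ i, ∑ j, (if s i j then (ℓ i - ℓ j) ⬝ᵥ x else 0) := by
  rw [sig, sum_dot]
  refine Finset.sum_congr rfl fun i _ => ?_
  rw [sum_dot]
  refine Finset.sum_congr rfl fun j _ => ?_
  by_cases hs : s i j
  · simp [hs]
  · simp [hs]

lemma sig_le_p (ℓ : Fin k → Fin n → ℝ) (s : Fin k → Fin k → Bool) (x : Fin n → ℝ) :
    sig ℓ s ⬝ᵥ x ≤ pfun ℓ x := by
  rw [sig_dot, pfun]
  refine Finset.sum_le_sum fun i _ => Finset.sum_le_sum fun j _ => ?_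
  by_cases hs : s i j
  · simp only [hs, if_true]; exact le_max_left _ _
  · simp only [hs, if_false]; exact le_max_right _ _

lemma p_eq_sig (ℓ : Fin k → Fin n → ℝ) (x : Fin n → ℝ) :
    pfun ℓ x = sig ℓ (fun i j => decide (0 ≤ (ℓ i - ℓ j) ⬝ᵥ x)) ⬝ᵥ x := by
  rw [sig_dot, pfun]
  refine Finset.sum_congr rfl fun i _ => Finset.sum_congr rfl fun j _ => ?_
  by_cases h0 : 0 ≤ (ℓ i - ℓ j) ⬝ᵥ x
  · rw [if_pos (by simpa using h0), max_eq_left h0]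
  · rw [if_neg (by simpa using h0), max_eq_right (le_of_not_ge h0)]

def SignCell (ℓ : Fin k → Fin n → ℝ) (s : Fin k → Fin k → Bool) : Set (Fin n → ℝ) :=
  {x | ∀ i j, if s i j then 0 ≤ (ℓ i - ℓ j) ⬝ᵥ x else (ℓ i - ℓ j) ⬝ᵥ x ≤ 0}

lemma signcell_closed (ℓ : Fin k → Fin n → ℝ) (s : Fin k → Fin k → Bool) :
    IsClosed (SignCell ℓ s) := by
  have : SignCell ℓ s = ⋂ i, ⋂ j,
      {x : Fin n → ℝ | if s i j then 0 ≤ (ℓ i - ℓ j) ⬝ᵥ x else (ℓ i - ℓ j) ⬝ᵥ x ≤ 0} := by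
    ext x; simp [SignCell, Set.mem_iInter]
  rw [this]
  refine isClosed_iInter fun i => isClosed_iInter fun j => ?_
  by_cases hs : s i j
  · have : {x : Fin n → ℝ | if s i j then 0 ≤ (ℓ i - ℓ j) ⬝ᵥ x else (ℓ i - ℓ j) ⬝ᵥ x ≤ 0}
        = {x : Fin n → ℝ | 0 ≤ (ℓ i - ℓ j) ⬝ᵥ x} := by
      ext x; rw [Set.mem_setOf_eq, if_pos hs]; rfl
    rw [this]
    exact isClosed_le continuous_const (cont_dot _)
  · have : {x : Fin n → ℝ | if s i j then 0 ≤ (ℓ i - ℓ j) ⬝ᵥ x else (ℓ i - ℓ j) ⬝ᵥ x ≤ 0}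
        = {x : Fin n → ℝ | (ℓ i - ℓ j) ⬝ᵥ x ≤ 0} := by
      ext x; rw [Set.mem_setOf_eq, if_neg hs]; rfl
    rw [this]
    exact isClosed_le (cont_dot _) continuous_const

lemma signcell_convex (ℓ : Fin k → Fin n → ℝ) (s : Fin k → Fin k → Bool) :
    Convex ℝ (SignCell ℓ s) := by
  intro x hx y hy a b ha hb hab
  intro i j
  have h1 := hx i j
  have h2 := hy i j
  by_cases hs : s i j
  · rw [if_pos hs] at h1 h2 ⊢
    rw [dot_combo]; nlinarith
  · rw [if_neg hs] at h1 h2 ⊢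
    rw [dot_combo]; nlinarith

def cellSet (A : Fin k → Finset (Fin n → ℝ)) (ℓ : Fin k → Fin n → ℝ)
    (w : Fin k × (Fin k → Fin k → Bool)) : Set (Fin n → ℝ) :=
  Cone (A w.1) ∩ SignCell ℓ w.2

lemma cell_closed (A : Fin k → Finset (Fin n → ℝ)) (ℓ : Fin k → Fin n → ℝ)
    (w : Fin k × (Fin k → Fin k → Bool)) : IsClosed (cellSet A ℓ w) :=
  (cone_closed _).inter (signcell_closed _ _)

lemma cell_mem (A : Fin k → Finset (Fin n → ℝ)) (ℓ : Fin k → Fin n → ℝ)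
    (hcover : ∀ x : Fin n → ℝ, ∃ i, x ∈ Cone (A i)) (x : Fin n → ℝ) :
    ∃ w, x ∈ cellSet A ℓ w := by
  obtain ⟨c, hc⟩ := hcover x
  refine ⟨(c, fun i j => decide (0 ≤ (ℓ i - ℓ j) ⬝ᵥ x)), hc, ?_⟩
  intro i j
  by_cases h0 : 0 ≤ (ℓ i - ℓ j) ⬝ᵥ x
  · rw [if_pos (by simpa using h0)]; exact h0
  · rw [if_neg (by simpa using h0)]; exact le_of_not_ge h0

noncomputable def Lvec (ℓ : Fin k → Fin n → ℝ) (w : Fin k × (Fin k → Fin k → Bool)) :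
    Fin n → ℝ :=
  ℓ w.1 + sig ℓ w.2

lemma cell_val (h : (Fin n → ℝ) → ℝ) (A : Fin k → Finset (Fin n → ℝ))
    (ℓ : Fin k → Fin n → ℝ)
    (hlin : ∀ i, ∀ x ∈ Cone (A i), h x = ℓ i ⬝ᵥ x)
    {w : Fin k × (Fin k → Fin k → Bool)} {x : Fin n → ℝ} (hx : x ∈ cellSet A ℓ w) :
    h x + pfun ℓ x = Lvec ℓ w ⬝ᵥ x := by
  obtain ⟨hx1, hx2⟩ := hx
  rw [Lvec, add_dotProduct, ← hlin w.1 x hx1]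
  congr 1
  rw [sig_dot, pfun]
  refine Finset.sum_congr rfl fun i _ => Finset.sum_congr rfl fun j _ => ?_
  have hij := hx2 i j
  by_cases hs : w.2 i j
  · rw [if_pos hs] at hij ⊢
    exact max_eq_left hij
  · rw [if_neg hs] at hij ⊢
    exact max_eq_right hij

lemma convexOn_sub_linear (g : (Fin n → ℝ) → ℝ) (hg : ConvexOn ℝ Set.univ g)
    (v : Fin n → ℝ) : ConvexOn ℝ Set.univ (fun z => g z - v ⬝ᵥ z) := by
  refine ⟨convex_univ, ?_⟩
  intro x _ y _ a b ha hb hab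
  have h1 := hg.2 (Set.mem_univ x) (Set.mem_univ y) ha hb hab
  simp only [smul_eq_mul] at h1 ⊢
  rw [dot_combo]
  linarith

lemma nonneg_of_zero_ball (φ : (Fin n → ℝ) → ℝ) (hφ : ConvexOn ℝ Set.univ φ)
    (x₀ : Fin n → ℝ) (r : ℝ) (hr : 0 < r)
    (h0 : ∀ z ∈ Metric.ball x₀ r, φ z = 0) : ∀ z, 0 ≤ φ z := by
  intro z
  by_cases hz : z = x₀
  · rw [hz, h0 x₀ (Metric.mem_ball_self hr)]
  · have hnorm : 0 < ‖x₀ - z‖ := by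
      rw [norm_pos_iff]
      exact sub_ne_zero.mpr (fun hh => hz hh.symm)
    set s := r / (2 * ‖x₀ - z‖) with hs
    have hspos : 0 < s := div_pos hr (by positivity)
    set w := x₀ + s • (x₀ - z) with hw
    have hwball : w ∈ Metric.ball x₀ r := by
      rw [Metric.mem_ball, dist_eq_norm]
      have hws : w - x₀ = s • (x₀ - z) := by rw [hw, add_sub_cancel_left]
      rw [hws, norm_smul, Real.norm_eq_abs, abs_of_pos hspos]
      have : s * ‖x₀ - z‖ = r / 2 := by
        rw [hs]; field_simp
      rw [this]; linarith
    have h1s : (0:ℝ) < 1 + s := by linarith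
    have hx₀ : x₀ = (1/(1+s)) • w + (s/(1+s)) • z := by
      rw [hw]; funext i
      simp only [Pi.add_apply, Pi.smul_apply, Pi.sub_apply, smul_eq_mul]
      field_simp; ring
    have hcoeff : 1/(1+s) + s/(1+s) = 1 := by field_simp
    have hc := hφ.2 (Set.mem_univ w) (Set.mem_univ z)
      (by positivity : (0:ℝ) ≤ 1/(1+s)) (le_of_lt (div_pos hspos h1s)) hcoeff
    rw [← hx₀] at hc
    rw [h0 x₀ (Metric.mem_ball_self hr), h0 w hwball] at hc
    simp only [smul_eq_mul, mul_zero, zero_add] at hc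
    have hpos : 0 < s/(1+s) := div_pos hspos h1s
    nlinarith [hc, hpos]

end PL13

end PLHelpers

open Matrix in
/-- every piecewise linear function on `ℝ^n` (linear on each
cone of a finite complete fan of polyhedral cones) is the difference of two
piecewise linear convex functions (i.e. maxima of finitely many linear
functions, equivalently support functions of convex polytopes). -/
theorem pl_function_diff_of_convex (n : ℕ) (h : (Fin n → ℝ) → ℝ)
    (k : ℕ) (A : Fin k → Finset (Fin n → ℝ)) (ℓ : Fin k → (Fin n → ℝ))
    -- the polyhedral cones `C i = {x | ∀ a ∈ A i, ⟨a, x⟩ ≥ 0}` cover `ℝ^n`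
    (hcover : ∀ x : Fin n → ℝ, ∃ i, ∀ a ∈ A i, 0 ≤ dotProduct a x)
    -- `h` is linear, given by `ℓ i`, on each cone `C i`
    (hlin : ∀ i, ∀ x : Fin n → ℝ, (∀ a ∈ A i, 0 ≤ dotProduct a x) →
      h x = dotProduct (ℓ i) x) :
    ∃ (F G : Finset (Fin n → ℝ)) (hF : F.Nonempty) (hG : G.Nonempty),
      ∀ x : Fin n → ℝ,
        h x = F.sup' hF (fun m => dotProduct m x)
              - G.sup' hG (fun m => dotProduct m x) := by
  classical
  have hcover' : ∀ x : Fin n → ℝ, ∃ i, x ∈ PL13.Cone (A i) := hcover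
  have hlin' : ∀ i, ∀ x ∈ PL13.Cone (A i), h x = ℓ i ⬝ᵥ x := fun i x hx => hlin i x hx
  have hgconv := PL13.g_convex h A ℓ hcover' hlin'
  have hgcont : Continuous fun x => h x + PL13.pfun ℓ x :=
    (PL13.h_cont h A ℓ hcover' hlin').add (PL13.p_cont ℓ)
  set G : Finset (Fin n → ℝ) :=
    Finset.image (fun s : Fin k → Fin k → Bool => PL13.sig ℓ s) Finset.univ with hGdef
  have hG : G.Nonempty :=
    ⟨PL13.sig ℓ (fun _ _ => true), Finset.mem_image_of_mem _ (Finset.mem_univ _)⟩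
  have hpG : ∀ x : Fin n → ℝ, PL13.pfun ℓ x = G.sup' hG (fun m => m ⬝ᵥ x) := by
    intro x
    apply le_antisymm
    · rw [PL13.p_eq_sig ℓ x]
      exact Finset.le_sup' (fun m => m ⬝ᵥ x)
        (Finset.mem_image_of_mem _ (Finset.mem_univ _))
    · refine Finset.sup'_le _ _ fun m hm => ?_
      obtain ⟨s, -, rfl⟩ := Finset.mem_image.1 hm
      exact PL13.sig_le_p ℓ s x
  set good : (Fin k × (Fin k → Fin k → Bool)) → Prop :=
    fun w => (interior (PL13.cellSet A ℓ w)).Nonempty with hgooddef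
  set F : Finset (Fin n → ℝ) :=
    Finset.image (PL13.Lvec ℓ) (Finset.univ.filter good) with hFdef
  have hdense : Dense {x : Fin n → ℝ | ∃ w, good w ∧ x ∈ PL13.cellSet A ℓ w} := by
    have hD : Dense (⋂ w : {w // ¬ good w}, (PL13.cellSet A ℓ w.1)ᶜ) := by
      apply dense_iInter_of_isOpen
      · exact fun w => (PL13.cell_closed A ℓ w.1).isOpen_compl
      · intro w
        rw [← interior_eq_empty_iff_dense_compl]
        exact Set.not_nonempty_iff_eq_empty.1 w.2
    refine hD.mono ?_
    intro x hx
    obtain ⟨w, hw⟩ := PL13.cell_mem A ℓ hcover' x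
    by_cases hgw : good w
    · exact ⟨w, hgw, hw⟩
    · exact absurd hw (Set.mem_iInter.1 hx ⟨w, hgw⟩)
  have hF : F.Nonempty := by
    obtain ⟨x, hx⟩ := hdense.nonempty
    obtain ⟨w, hgw, -⟩ := hx
    exact ⟨PL13.Lvec ℓ w,
      Finset.mem_image_of_mem _ (Finset.mem_filter.2 ⟨Finset.mem_univ _, hgw⟩)⟩
  have hFle : ∀ x : Fin n → ℝ, ∀ m ∈ F, m ⬝ᵥ x ≤ h x + PL13.pfun ℓ x := by
    intro x m hm
    obtain ⟨w, hwmem, rfl⟩ := Finset.mem_image.1 hm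
    have hgw : good w := (Finset.mem_filter.1 hwmem).2
    obtain ⟨x₀, hx₀⟩ := hgw
    obtain ⟨r, hr, hball⟩ := Metric.isOpen_iff.1 isOpen_interior x₀ hx₀
    have hball' : Metric.ball x₀ r ⊆ PL13.cellSet A ℓ w := hball.trans interior_subset
    set φ : (Fin n → ℝ) → ℝ :=
      fun z => (h z + PL13.pfun ℓ z) - PL13.Lvec ℓ w ⬝ᵥ z with hφdef
    have hφconv : ConvexOn ℝ Set.univ φ := PL13.convexOn_sub_linear _ hgconv _
    have hφ0 : ∀ z ∈ Metric.ball x₀ r, φ z = 0 := by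
      intro z hz
      have := PL13.cell_val h A ℓ hlin' (hball' hz)
      simp only [hφdef]
      linarith
    have hnn := PL13.nonneg_of_zero_ball φ hφconv x₀ r hr hφ0 x
    simp only [hφdef] at hnn
    linarith
  have hsup_le : ∀ x, F.sup' hF (fun m => m ⬝ᵥ x) ≤ h x + PL13.pfun ℓ x :=
    fun x => Finset.sup'_le _ _ fun m hm => hFle x m hm
  have hle_sup : ∀ x, h x + PL13.pfun ℓ x ≤ F.sup' hF (fun m => m ⬝ᵥ x) := by
    set S : Set (Fin n → ℝ) :=
      {x | h x + PL13.pfun ℓ x ≤ F.sup' hF (fun m => m ⬝ᵥ x)} with hSdef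
    have hSeq : S = ⋃ m ∈ F, {x : Fin n → ℝ | h x + PL13.pfun ℓ x ≤ m ⬝ᵥ x} := by
      ext x
      simp only [hSdef, Set.mem_setOf_eq, Set.mem_iUnion, exists_prop]
      rw [Finset.le_sup'_iff]
    have hSclosed : IsClosed S := by
      rw [hSeq]
      exact Set.Finite.isClosed_biUnion F.finite_toSet fun m _ =>
        isClosed_le hgcont (PL13.cont_dot m)
    have hsub : {x : Fin n → ℝ | ∃ w, good w ∧ x ∈ PL13.cellSet A ℓ w} ⊆ S := by
      rintro x ⟨w, hgw, hxw⟩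
      have hval := PL13.cell_val h A ℓ hlin' hxw
      have hmem : PL13.Lvec ℓ w ∈ F :=
        Finset.mem_image_of_mem _ (Finset.mem_filter.2 ⟨Finset.mem_univ _, hgw⟩)
      have hls := Finset.le_sup' (fun m => m ⬝ᵥ x) hmem
      show h x + PL13.pfun ℓ x ≤ F.sup' hF (fun m => m ⬝ᵥ x)
      rw [hval]
      exact hls
    intro x
    exact closure_minimal hsub hSclosed (hdense x)
  refine ⟨F, G, hF, hG, fun x => ?_⟩
  have h1 : h x + PL13.pfun ℓ x = F.sup' hF (fun m => m ⬝ᵥ x) :=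
    le_antisymm (hle_sup x) (hsup_le x)
  have h2 := hpG x
  linarith [h1, h2]
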